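/- There exists an economy with two families in which a market equilibrium from equal endowments fails the individual-fair-share guarantee. Concretely: two goods with one unit each, families f = {h,w}, f' = {h',w'} with Cobb-Douglas coefficients α_h = 0.9, α_w = 0.6, α_{w'} = 0.4, α_{h'} = 0.1; the price p = (1,1) with allocation x_f = (0.9, 0.1), x_{f'} = (0.1, 0.9) from equal endowments (0.5, 0.5) is a market equilibrium (each family's bundle is affordable and any bundle unanimously strictly preferred is unaffordable), yet both wives strictly prefer (0.5, 0.5) to their family's bundle: 0.9^{0.6}·0.1^{0.4} < 0.5. -/
import Mathlib


/-- Cobb-Douglas utility with coefficient `a`. -/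
noncomputable def cd (a : ℝ) (x : Fin 2 → ℝ) : ℝ := x 0 ^ a * x 1 ^ (1 - a)

open Real

lemma cobb_lt {a y z : ℝ} (ha0 : 0 < a) (ha1 : a < 1) (hy : 0 ≤ y) (hz : 0 ≤ z)
    (hsum : y + z ≤ 1) (hne : y ≠ a ∨ z ≠ 1 - a) :
    y ^ a * z ^ (1 - a) < a ^ a * (1 - a) ^ (1 - a) := by
  have ha1' : (0:ℝ) < 1 - a := by linarith
  have hM : 0 < a ^ a * (1 - a) ^ (1 - a) :=
    mul_pos (Real.rpow_pos_of_pos ha0 _) (Real.rpow_pos_of_pos ha1' _)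
  rcases eq_or_lt_of_le hy with hy0 | hy0
  · rw [← hy0, Real.zero_rpow (ne_of_gt ha0), zero_mul]; exact hM
  rcases eq_or_lt_of_le hz with hz0 | hz0
  · rw [← hz0, Real.zero_rpow (ne_of_gt ha1'), mul_zero]; exact hM
  by_cases hpq : (1 - a) * y = a * z
  · -- z = (1-a)/a * y, and y < a
    have hzval : z = (1 - a) / a * y := by field_simp; linarith
    have hya : y < a := by
      rcases hne with h | h
      · rcases lt_or_gt_of_ne h with h' | h'
        · exact h'
        · exfalso
          have : y + z ≤ 1 := hsum
          nlinarith
      · rcases lt_or_ge y a with h' | h'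
        · exact h'
        · exfalso
          have hz' : z = 1 - a := by nlinarith
          exact h hz'
    have key : y ^ a * z ^ (1 - a) = y * ((1 - a) / a) ^ (1 - a) := by
      rw [hzval, Real.mul_rpow (by positivity) hy, ← mul_assoc, mul_comm (y ^ a),
        mul_assoc, ← Real.rpow_add hy0]
      norm_num
      ring
    have haa : a ^ a * a ^ (1 - a) = a := by
      rw [← Real.rpow_add ha0]; norm_num
    have key2 : a ^ a * (1 - a) ^ (1 - a) = a * ((1 - a) / a) ^ (1 - a) := by
      have hane : a ^ (1 - a) ≠ 0 := ne_of_gt (Real.rpow_pos_of_pos ha0 _)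
      rw [Real.div_rpow (le_of_lt ha1') (le_of_lt ha0), mul_div_assoc', eq_div_iff hane]
      linear_combination ((1 - a) ^ (1 - a)) * haa
    rw [key, key2]
    have hC : 0 < ((1 - a) / a) ^ (1 - a) := Real.rpow_pos_of_pos (by positivity) _
    exact mul_lt_mul_of_pos_right hya hC
  · -- strict Jensen on log
    set P := y / a with hP
    set Q := z / (1 - a) with hQ
    have hP0 : 0 < P := by positivity
    have hQ0 : 0 < Q := by positivity
    have hPQ : P ≠ Q := by
      intro h
      apply hpq
      rw [hP, hQ, div_eq_div_iff (ne_of_gt ha0) (ne_of_gt ha1')] at h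
      nlinarith
    have hjen := strictConcaveOn_log_Ioi.2 (Set.mem_Ioi.2 hP0) (Set.mem_Ioi.2 hQ0) hPQ
      ha0 ha1' (by ring)
    simp only [smul_eq_mul] at hjen
    have hsum' : a * P + (1 - a) * Q = y + z := by rw [hP, hQ]; field_simp
    have hlog : a * Real.log P + (1 - a) * Real.log Q < 0 := by
      have h1 : Real.log (a * P + (1 - a) * Q) ≤ 0 := by
        rw [hsum']; exact Real.log_nonpos (by linarith) hsum
      linarith
    have hprod : P ^ a * Q ^ (1 - a) < 1 := by
      have hpos : 0 < P ^ a * Q ^ (1 - a) :=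
        mul_pos (Real.rpow_pos_of_pos hP0 _) (Real.rpow_pos_of_pos hQ0 _)
      have : Real.log (P ^ a * Q ^ (1 - a)) < 0 := by
        rw [Real.log_mul (ne_of_gt (Real.rpow_pos_of_pos hP0 _))
          (ne_of_gt (Real.rpow_pos_of_pos hQ0 _)), Real.log_rpow hP0, Real.log_rpow hQ0]
        exact hlog
      nlinarith [Real.exp_log hpos, Real.exp_lt_exp.2 this, Real.exp_zero]
    have hy' : y = a * P := by rw [hP]; field_simp
    have hz' : z = (1 - a) * Q := by rw [hQ]; field_simp
    calc y ^ a * z ^ (1 - a) = (a ^ a * (1 - a) ^ (1 - a)) * (P ^ a * Q ^ (1 - a)) := by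
          rw [hy', hz', Real.mul_rpow (le_of_lt ha0) (le_of_lt hP0),
            Real.mul_rpow (le_of_lt ha1') (le_of_lt hQ0)]; ring
      _ < (a ^ a * (1 - a) ^ (1 - a)) * 1 := by
          exact mul_lt_mul_of_pos_left hprod hM
      _ = a ^ a * (1 - a) ^ (1 - a) := mul_one _

lemma half_eq : (0.5:ℝ) ^ (0.6:ℝ) * (0.5:ℝ) ^ (0.4:ℝ) = 0.5 := by
  rw [← Real.rpow_add (by norm_num)]
  norm_num

lemma num_lt : (0.9:ℝ) ^ (0.6:ℝ) * (0.1:ℝ) ^ (0.4:ℝ) < 0.5 := by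
  refine lt_of_pow_lt_pow_left₀ 10 (by norm_num) ?_
  have e1 : ((0.9:ℝ) ^ (0.6:ℝ)) ^ (10:ℕ) = (0.9:ℝ) ^ (6:ℕ) := by
    rw [← Real.rpow_natCast ((0.9:ℝ) ^ (0.6:ℝ)) 10, ← Real.rpow_mul (by norm_num),
      ← Real.rpow_natCast (0.9:ℝ) 6]
    norm_num
  have e2 : ((0.1:ℝ) ^ (0.4:ℝ)) ^ (10:ℕ) = (0.1:ℝ) ^ (4:ℕ) := by
    rw [← Real.rpow_natCast ((0.1:ℝ) ^ (0.4:ℝ)) 10, ← Real.rpow_mul (by norm_num),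
      ← Real.rpow_natCast (0.1:ℝ) 4]
    norm_num
  rw [mul_pow, e1, e2]
  norm_num


/-- A market equilibrium from equal endowments that fails individual-fair-share:
agents 0=h, 1=w, 2=h', 3=w' with Cobb-Douglas coefficients .9, .6, .1, .4,
families {h,w} and {h',w'}, endowment (1,1), price (1,1), allocation
x_f = (0.9, 0.1), x_{f'} = (0.1, 0.9). Both wives strictly prefer (0.5,0.5). -/
theorem stmt_9 :
    let e : Fin 2 → ℝ := ![1, 1]
    let ebar : Fin 2 → ℝ := ![0.5, 0.5]
    let p : Fin 2 → ℝ := ![1, 1]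
    let u : Fin 4 → (Fin 2 → ℝ) → ℝ := fun i => cd (![(0.9 : ℝ), 0.6, 0.1, 0.4] i)
    let fam : Fin 4 → Fin 2 := ![0, 0, 1, 1]
    let x : Fin 2 → Fin 2 → ℝ := ![![0.9, 0.1], ![0.1, 0.9]]
    (∀ f g, 0 ≤ x f g) ∧ (∀ g, ∑ f, x f g ≤ e g) ∧
    (∀ f, (∑ g, p g * x f g) ≤ ∑ g, p g * ebar g) ∧
    (∀ f, ∀ x' : Fin 2 → ℝ, (∀ g, 0 ≤ x' g) →
      ((∀ i, fam i = f → u i x' ≥ u i (x f)) ∧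
        ∃ j, fam j = f ∧ u j x' > u j (x f)) →
      (∑ g, p g * ebar g) < ∑ g, p g * x' g) ∧
    u 1 (x (fam 1)) < u 1 ebar ∧ u 3 (x (fam 3)) < u 3 ebar := by
  intro e ebar p u fam x
  refine ⟨?_, ?_, ?_, ?_, ?_, ?_⟩
  · intro f g
    fin_cases f <;> fin_cases g <;> norm_num [x]
  · intro g
    fin_cases g <;> simp [x, e, Fin.sum_univ_two] <;> norm_num
  · intro f
    fin_cases f <;> simp [x, p, ebar, Fin.sum_univ_two] <;> norm_num
  · intro f x' hx' ⟨hall, j, hjf, hjs⟩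
    have hgoal : (∑ g, p g * ebar g) = 1 := by
      simp [p, ebar, Fin.sum_univ_two]; norm_num
    rw [hgoal]
    have hsum : (∑ g, p g * x' g) = x' 0 + x' 1 := by
      simp [p, Fin.sum_univ_two]
    rw [hsum]
    by_contra hc
    push_neg at hc
    fin_cases f
    · have hh := hall 0 rfl
      simp only [u, x, cd, fam, Matrix.cons_val_zero, Matrix.cons_val_one, Matrix.head_cons, Matrix.cons_val_two, Matrix.cons_val_three, Matrix.vecTail, Matrix.vecHead] at hh
      have key := cobb_lt (a := 0.9) (y := x' 0) (z := x' 1) (by norm_num) (by norm_num)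
        (hx' 0) (hx' 1) hc
      by_cases h0 : x' 0 = 0.9 ∧ x' 1 = 0.1
      · obtain ⟨h0a, h0b⟩ := h0
        simp [u, cd, x, h0a, h0b] at hjs
      · have hne : x' 0 ≠ 0.9 ∨ x' 1 ≠ (1:ℝ) - 0.9 := by
          rw [not_and_or] at h0
          rcases h0 with h | h
          · exact Or.inl h
          · right; intro hcon; apply h; rw [hcon]; norm_num
        have hlt := key hne
        norm_num at hlt hh
        linarith
    · have hh := hall 2 rfl
      simp only [u, x, cd, fam, Matrix.cons_val_zero, Matrix.cons_val_one, Matrix.head_cons, Matrix.cons_val_two, Matrix.cons_val_three, Matrix.vecTail, Matrix.vecHead] at hh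
      have key := cobb_lt (a := 0.1) (y := x' 0) (z := x' 1) (by norm_num) (by norm_num)
        (hx' 0) (hx' 1) hc
      by_cases h0 : x' 0 = 0.1 ∧ x' 1 = 0.9
      · obtain ⟨h0a, h0b⟩ := h0
        simp [u, cd, x, h0a, h0b] at hjs
      · have hne : x' 0 ≠ 0.1 ∨ x' 1 ≠ (1:ℝ) - 0.1 := by
          rw [not_and_or] at h0
          rcases h0 with h | h
          · exact Or.inl h
          · right; intro hcon; apply h; rw [hcon]; norm_num
        have hlt := key hne
        norm_num at hlt hh
        linarith
  · show (0.9:ℝ) ^ (0.6:ℝ) * (0.1:ℝ) ^ (1 - (0.6:ℝ)) < (0.5:ℝ) ^ (0.6:ℝ) * (0.5:ℝ) ^ (1 - (0.6:ℝ))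
    rw [show (1:ℝ) - 0.6 = 0.4 by norm_num]
    calc (0.9:ℝ) ^ (0.6:ℝ) * (0.1:ℝ) ^ (0.4:ℝ) < 0.5 := num_lt
      _ = (0.5:ℝ) ^ (0.6:ℝ) * (0.5:ℝ) ^ (0.4:ℝ) := half_eq.symm
  · show (0.1:ℝ) ^ (0.4:ℝ) * (0.9:ℝ) ^ (1 - (0.4:ℝ)) < (0.5:ℝ) ^ (0.4:ℝ) * (0.5:ℝ) ^ (1 - (0.4:ℝ))
    rw [show (1:ℝ) - 0.4 = 0.6 by norm_num]
    calc (0.1:ℝ) ^ (0.4:ℝ) * (0.9:ℝ) ^ (0.6:ℝ) < 0.5 := by rw [mul_comm]; exact num_lt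
      _ = (0.5:ℝ) ^ (0.4:ℝ) * (0.5:ℝ) ^ (0.6:ℝ) := by rw [mul_comm]; exact half_eq.symm
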